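/- If G ∈ V satisfies v_j^{(n)} · G ∈ ∂V for all (j,n) ∈ J × ℕ, then G = 0. Equivalently: if ∫ v_j^{(n)} G = 0 for every odd variable v_j^{(n)}, then G = 0. (Lemma 4.12, the case of odd generators.) -/

import Mathlib

namespace Stmt6Aux

open CliffordAlgebra

variable {J : Type*}

/-- Coordinate dual functional. -/
noncomputable def dl (p : J × ℕ) : Module.Dual ℂ ((J × ℕ) →₀ ℂ) :=
  Finsupp.lapply p

@[simp] theorem dl_apply (p : J × ℕ) (w : (J × ℕ) →₀ ℂ) : dl p w = w p := rfl

/-- Contraction operator on the exterior algebra. -/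
noncomputable def ctr (d : Module.Dual ℂ ((J × ℕ) →₀ ℂ)) :
    ExteriorAlgebra ℂ ((J × ℕ) →₀ ℂ) →ₗ[ℂ] ExteriorAlgebra ℂ ((J × ℕ) →₀ ℂ) :=
  CliffordAlgebra.contractLeft d

theorem ctr_zero : ctr (0 : Module.Dual ℂ ((J × ℕ) →₀ ℂ)) = 0 := by
  unfold ctr
  exact map_zero _

theorem ctr_algebraMap (d : Module.Dual ℂ ((J × ℕ) →₀ ℂ)) (r : ℂ) :
    ctr d (algebraMap ℂ (ExteriorAlgebra ℂ ((J × ℕ) →₀ ℂ)) r) = 0 :=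
  CliffordAlgebra.contractLeft_algebraMap _ _ _

theorem ctr_ι (d : Module.Dual ℂ ((J × ℕ) →₀ ℂ)) (w : (J × ℕ) →₀ ℂ) :
    ctr d (ExteriorAlgebra.ι ℂ w)
      = algebraMap ℂ (ExteriorAlgebra ℂ ((J × ℕ) →₀ ℂ)) (d w) :=
  CliffordAlgebra.contractLeft_ι _ _ _

theorem ctr_ι_mul (d : Module.Dual ℂ ((J × ℕ) →₀ ℂ)) (w : (J × ℕ) →₀ ℂ)
    (y : ExteriorAlgebra ℂ ((J × ℕ) →₀ ℂ)) :
    ctr d (ExteriorAlgebra.ι ℂ w * y) = d w • y - ExteriorAlgebra.ι ℂ w * ctr d y :=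
  CliffordAlgebra.contractLeft_ι_mul _ _ _

theorem ctr_ctr (d : Module.Dual ℂ ((J × ℕ) →₀ ℂ))
    (x : ExteriorAlgebra ℂ ((J × ℕ) →₀ ℂ)) :
    ctr d (ctr d x) = 0 :=
  CliffordAlgebra.contractLeft_contractLeft _ _

/-- Twisted Leibniz rule for contraction. -/
theorem ctr_mul (d : Module.Dual ℂ ((J × ℕ) →₀ ℂ))
    (x y : ExteriorAlgebra ℂ ((J × ℕ) →₀ ℂ)) :
    ctr d (x * y) = ctr d x * y + involute x * ctr d y := by
  induction x using CliffordAlgebra.induction generalizing y with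
  | algebraMap r =>
    rw [← Algebra.smul_def, map_smul, ctr_algebraMap, AlgHom.commutes, zero_mul, zero_add,
      ← Algebra.smul_def]
  | ι m =>
    rw [ctr_ι_mul, ctr_ι, involute_ι, ← Algebra.smul_def, neg_mul, sub_eq_add_neg]
  | mul a b ha hb =>
    rw [mul_assoc, ha (b * y), hb y, ha b, map_mul]
    noncomm_ring
  | add a b ha hb =>
    rw [add_mul, map_add, ha y, hb y, map_add, map_add, add_mul, add_mul]
    abel

section D

variable (D : ExteriorAlgebra ℂ ((J × ℕ) →₀ ℂ) →ₗ[ℂ] ExteriorAlgebra ℂ ((J × ℕ) →₀ ℂ))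
variable (hDmul : ∀ x y : ExteriorAlgebra ℂ ((J × ℕ) →₀ ℂ), D (x * y) = D x * y + x * D y)

include hDmul

theorem D_one : D 1 = 0 := by
  have h := hDmul 1 1
  rw [mul_one, mul_one, one_mul] at h
  exact right_eq_add.mp h

theorem D_algebraMap (r : ℂ) :
    D (algebraMap ℂ (ExteriorAlgebra ℂ ((J × ℕ) →₀ ℂ)) r) = 0 := by
  rw [Algebra.algebraMap_eq_smul_one, map_smul, D_one D hDmul, smul_zero]

variable (shift : ((J × ℕ) →₀ ℂ) →ₗ[ℂ] ((J × ℕ) →₀ ℂ))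
variable (hDι : ∀ w : (J × ℕ) →₀ ℂ,
    D (ExteriorAlgebra.ι ℂ w) = ExteriorAlgebra.ι ℂ (shift w))

include hDι

theorem D_involute (x : ExteriorAlgebra ℂ ((J × ℕ) →₀ ℂ)) :
    D (involute x) = involute (D x) := by
  induction x using CliffordAlgebra.induction with
  | algebraMap r =>
    rw [AlgHom.commutes, D_algebraMap D hDmul, map_zero]
  | ι m =>
    rw [involute_ι, map_neg, hDι, involute_ι]
  | mul a b ha hb =>
    rw [map_mul, hDmul, ha, hb, hDmul, map_add, map_mul, map_mul]
  | add a b ha hb =>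
    simp only [map_add, ha, hb]

/-- Commutation of contraction with the total derivative. -/
theorem ctr_D (d d' : Module.Dual ℂ ((J × ℕ) →₀ ℂ))
    (hdd' : ∀ w, d (shift w) = d' w)
    (x : ExteriorAlgebra ℂ ((J × ℕ) →₀ ℂ)) :
    ctr d (D x) = D (ctr d x) + ctr d' x := by
  induction x using CliffordAlgebra.induction with
  | algebraMap r =>
    rw [D_algebraMap D hDmul, map_zero, ctr_algebraMap, ctr_algebraMap, map_zero, add_zero]
  | ι m =>
    rw [hDι, ctr_ι, ctr_ι, ctr_ι, hdd', D_algebraMap D hDmul, zero_add]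
  | mul a b ha hb =>
    have h1 : ctr d (D (a * b))
        = (D (ctr d a) + ctr d' a) * b + involute (D a) * ctr d b
          + (ctr d a * D b + involute a * (D (ctr d b) + ctr d' b)) := by
      rw [hDmul, map_add, ctr_mul, ctr_mul, ha, hb]
    have h2 : D (ctr d (a * b))
        = D (ctr d a) * b + ctr d a * D b
          + (involute (D a) * ctr d b + involute a * D (ctr d b)) := by
      rw [ctr_mul, map_add, hDmul, hDmul, D_involute D hDmul shift hDι]
    have h3 : ctr d' (a * b) = ctr d' a * b + involute a * ctr d' b := ctr_mul _ _ _
    rw [h1, h2, h3, add_mul, mul_add]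
    abel
  | add a b ha hb =>
    simp only [map_add, ha, hb]
    abel

end D

/-- Row-wise level bound: high contractions in a fixed row kill any element. -/
theorem exists_bound (j : J) (x : ExteriorAlgebra ℂ ((J × ℕ) →₀ ℂ)) :
    ∃ N : ℕ, ∀ n, N ≤ n → ctr (dl (j, n)) x = 0 := by
  induction x using CliffordAlgebra.induction with
  | algebraMap r => exact ⟨0, fun n _ => ctr_algebraMap _ _⟩
  | ι m =>
    refine ⟨(m.support.sup fun p => p.2) + 1, fun n hn => ?_⟩
    have hz : m (j, n) = 0 := by
      by_contra h
      have hmem : (j, n) ∈ m.support := Finsupp.mem_support_iff.mpr h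
      have h2 := Finset.le_sup (f := fun p : J × ℕ => p.2) hmem
      simp only at h2
      omega
    rw [ctr_ι, dl_apply, hz, map_zero]
  | mul a b ha hb =>
    obtain ⟨Na, hNa⟩ := ha
    obtain ⟨Nb, hNb⟩ := hb
    refine ⟨max Na Nb, fun n hn => ?_⟩
    rw [ctr_mul, hNa n (le_trans (le_max_left _ _) hn), hNb n (le_trans (le_max_right _ _) hn),
      zero_mul, mul_zero, add_zero]
  | add a b ha hb =>
    obtain ⟨Na, hNa⟩ := ha
    obtain ⟨Nb, hNb⟩ := hb
    refine ⟨max Na Nb, fun n hn => ?_⟩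
    rw [map_add, hNa n (le_trans (le_max_left _ _) hn), hNb n (le_trans (le_max_right _ _) hn),
      add_zero]

section shiftsec

variable (shift : ((J × ℕ) →₀ ℂ) →ₗ[ℂ] ((J × ℕ) →₀ ℂ))
variable (hshift : ∀ (j : J) (n : ℕ),
    shift (Finsupp.single (j, n) (1 : ℂ)) = Finsupp.single (j, n + 1) (1 : ℂ))

include hshift

theorem shift_single (p : J × ℕ) (c : ℂ) :
    shift (Finsupp.single p c) = Finsupp.single (p.1, p.2 + 1) c := by
  obtain ⟨j, n⟩ := p
  have h : Finsupp.single ((j, n) : J × ℕ) c = c • Finsupp.single (j, n) (1 : ℂ) := by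
    rw [Finsupp.smul_single, smul_eq_mul, mul_one]
  rw [h, map_smul, hshift j n, Finsupp.smul_single, smul_eq_mul, mul_one]

theorem shift_apply_zero (w : (J × ℕ) →₀ ℂ) (j : J) : shift w (j, 0) = 0 := by
  induction w using Finsupp.induction with
  | zero => simp
  | single_add p c f hp hc ih =>
    rw [map_add, Finsupp.add_apply, ih, add_zero, shift_single shift hshift]
    exact Finsupp.single_eq_of_ne' (by simp)

theorem shift_apply_succ (w : (J × ℕ) →₀ ℂ) (j : J) (n : ℕ) :
    shift w (j, n + 1) = w (j, n) := by
  induction w using Finsupp.induction with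
  | zero => simp
  | single_add p c f hp hc ih =>
    classical
    rw [map_add, Finsupp.add_apply, Finsupp.add_apply, ih, shift_single shift hshift]
    have hs : (Finsupp.single ((p.1, p.2 + 1) : J × ℕ) c) (j, n + 1)
        = (Finsupp.single p c) (j, n) := by
      rw [Finsupp.single_apply, Finsupp.single_apply]
      have hiff : ((p.1, p.2 + 1) = (j, n + 1)) ↔ (p = (j, n)) := by
        obtain ⟨a, b⟩ := p
        simp [Prod.ext_iff]
      simp only [hiff]
    rw [hs]

end shiftsec

/-- The "one lower" dual functional. -/
noncomputable def dd' (j : J) : ℕ → Module.Dual ℂ ((J × ℕ) →₀ ℂ)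
  | 0 => 0
  | n + 1 => dl (j, n)

/-- Main extraction lemma: if `v_{j,N} * G = D H` and all row-`j` contractions of `G`
of index `≥ N` vanish, then `G` is the `(j, N-1)` contraction of `H` (resp. `0` if
`N = 0`). -/
theorem main_lemma
    (shift : ((J × ℕ) →₀ ℂ) →ₗ[ℂ] ((J × ℕ) →₀ ℂ))
    (hshift : ∀ (j : J) (n : ℕ),
      shift (Finsupp.single (j, n) (1 : ℂ)) = Finsupp.single (j, n + 1) (1 : ℂ))
    (D : ExteriorAlgebra ℂ ((J × ℕ) →₀ ℂ) →ₗ[ℂ] ExteriorAlgebra ℂ ((J × ℕ) →₀ ℂ))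
    (hDmul : ∀ x y : ExteriorAlgebra ℂ ((J × ℕ) →₀ ℂ), D (x * y) = D x * y + x * D y)
    (hDι : ∀ w : (J × ℕ) →₀ ℂ,
      D (ExteriorAlgebra.ι ℂ w) = ExteriorAlgebra.ι ℂ (shift w))
    (j : J) (N : ℕ) (G H : ExteriorAlgebra ℂ ((J × ℕ) →₀ ℂ))
    (hH : D H = ExteriorAlgebra.ι ℂ (Finsupp.single (j, N) (1 : ℂ)) * G)
    (hG' : ∀ n, N ≤ n → ctr (dl (j, n)) G = 0) :
    G = ctr (dd' j N) H := by
  have hcomm : ∀ (n : ℕ) (x : ExteriorAlgebra ℂ ((J × ℕ) →₀ ℂ)),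
      ctr (dl (j, n)) (D x) = D (ctr (dl (j, n)) x) + ctr (dd' j n) x := by
    intro n x
    refine ctr_D D hDmul shift hDι _ _ ?_ x
    intro w
    cases n with
    | zero =>
      rw [dl_apply, shift_apply_zero shift hshift]
      rfl
    | succ m =>
      rw [dl_apply, shift_apply_succ shift hshift]
      rfl
  obtain ⟨Mb, hMb⟩ := exists_bound j H
  have rel : ∀ n, N ≤ n →
      ctr (dl (j, n)) H = -D (ctr (dl (j, n + 1)) H) := by
    intro n hn
    have h1 : ctr (dl (j, n + 1)) (D H) = 0 := by
      classical
      rw [hH, ctr_ι_mul, hG' (n + 1) (by omega), mul_zero, sub_zero, dl_apply,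
        Finsupp.single_apply, if_neg (by simp; omega), zero_smul]
    have h2 := hcomm (n + 1) H
    rw [h1] at h2
    have h3 : dd' j (n + 1) = dl (j, n) := rfl
    rw [h3] at h2
    exact eq_neg_of_add_eq_zero_right h2.symm
  have desc : ∀ n, N ≤ n → ctr (dl (j, n)) H = 0 := by
    have key : ∀ (k n : ℕ), N ≤ n → Mb ≤ n + k → ctr (dl (j, n)) H = 0 := by
      intro k
      induction k with
      | zero =>
        intro n hn hM
        exact hMb n (by omega)
      | succ k ih =>
        intro n hn hM
        rw [rel n hn, ih (n + 1) (by omega) (by omega), map_zero, neg_zero]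
    intro n hn
    exact key Mb n hn (by omega)
  have h1 : ctr (dl (j, N)) (D H) = G := by
    rw [hH, ctr_ι_mul, hG' N le_rfl, mul_zero, sub_zero, dl_apply, Finsupp.single_eq_same,
      one_smul]
  have h2 := hcomm N H
  rw [h1, desc N le_rfl, map_zero, zero_add] at h2
  exact h2

end Stmt6Aux

/-- Lemma 4.12, case of odd generators.  In the exterior algebra
`V = ExteriorAlgebra ℂ ((J × ℕ) →₀ ℂ)` of differential polynomials in odd variables
`v_j^{(n)} = ι (single (j,n) 1)`, with total derivative `D` (the unique ℂ-linear odd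
Leibniz map with `D ι(w) = ι(shift w)`): if `v_j^{(n)} · G` is a total derivative for
every odd variable `v_j^{(n)}`, then `G = 0`. -/
theorem stmt_6 {J : Type*} [Nonempty J]
    (shift : ((J × ℕ) →₀ ℂ) →ₗ[ℂ] ((J × ℕ) →₀ ℂ))
    (hshift : ∀ (j : J) (n : ℕ),
      shift (Finsupp.single (j, n) (1 : ℂ)) = Finsupp.single (j, n + 1) (1 : ℂ))
    (D : ExteriorAlgebra ℂ ((J × ℕ) →₀ ℂ) →ₗ[ℂ] ExteriorAlgebra ℂ ((J × ℕ) →₀ ℂ))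
    (hDmul : ∀ x y : ExteriorAlgebra ℂ ((J × ℕ) →₀ ℂ), D (x * y) = D x * y + x * D y)
    (hDι : ∀ w : (J × ℕ) →₀ ℂ,
      D (ExteriorAlgebra.ι ℂ w) = ExteriorAlgebra.ι ℂ (shift w))
    (G : ExteriorAlgebra ℂ ((J × ℕ) →₀ ℂ))
    (hG : ∀ (j : J) (n : ℕ),
      ExteriorAlgebra.ι ℂ (Finsupp.single (j, n) (1 : ℂ)) * G ∈ Set.range ⇑D) :
    G = 0 := by
  classical
  obtain ⟨j0⟩ := (inferInstance : Nonempty J)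
  by_cases hall : ∀ p : J × ℕ, Stmt6Aux.ctr (Stmt6Aux.dl p) G = 0
  · obtain ⟨H, hH⟩ := hG j0 0
    have hm := Stmt6Aux.main_lemma shift hshift D hDmul hDι j0 0 G H hH
      (fun n _ => hall (j0, n))
    rw [hm]
    have hz : Stmt6Aux.dd' j0 0 = (0 : Module.Dual ℂ ((J × ℕ) →₀ ℂ)) := rfl
    rw [hz, Stmt6Aux.ctr_zero]
    rfl
  · push_neg at hall
    obtain ⟨⟨j, n0⟩, hp0⟩ := hall
    obtain ⟨Mb, hMb⟩ := Stmt6Aux.exists_bound j G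
    have hn0M : n0 ≤ Mb := by
      by_contra h
      exact hp0 (hMb n0 (by omega))
    set P : ℕ → Prop := fun n => Stmt6Aux.ctr (Stmt6Aux.dl (j, n)) G ≠ 0 with hP
    have hp0' : P n0 := hp0
    set b := Nat.findGreatest P Mb with hbdef
    have hPb : P b := Nat.findGreatest_spec hn0M hp0'
    have hG' : ∀ n, b + 1 ≤ n → Stmt6Aux.ctr (Stmt6Aux.dl (j, n)) G = 0 := by
      intro n hn
      by_cases hnM : n ≤ Mb
      · by_contra hne
        have hlt : b < n := by omega
        exact (Nat.findGreatest_is_greatest hlt hnM) hne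
      · exact hMb n (by omega)
    obtain ⟨H, hH⟩ := hG j (b + 1)
    have hm := Stmt6Aux.main_lemma shift hshift D hDmul hDι j (b + 1) G H hH hG'
    have hz : Stmt6Aux.ctr (Stmt6Aux.dl (j, b)) G = 0 := by
      have hd : Stmt6Aux.dd' j (b + 1) = Stmt6Aux.dl (j, b) := rfl
      rw [hm, hd]
      exact Stmt6Aux.ctr_ctr _ _
    exact absurd hz hPb
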